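/- Let V be a vector space over a field K, let u = (u₁, …, u_m) be vectors in V generating a subspace U, and let β = (β₁, …, β_n) be functionals in V* generating a subspace B. Let β(u) ∈ K^{n×m} be the evaluation matrix with (i,j) entry β_i(u_j). If κ¹, …, κ^s ∈ K^n is a basis of the kernel of the transpose matrix β(u)ᵀ, then U⊥ ∩ B is generated by the functionals Σ_{i=1}^n κ¹_i β_i, …, Σ_{i=1}^n κ^s_i β_i. -/

import Mathlib

theorem stmt_13 {K V : Type*} [Field K] [AddCommGroup V] [Module K V]
    {m n s : ℕ} (u : Fin m → V) (β : Fin n → Module.Dual K V)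
    (M : Matrix (Fin n) (Fin m) K) (hM : ∀ i j, M i j = β i (u j))
    (κ : Fin s → (Fin n → K))
    (hκli : LinearIndependent K κ)
    (hκspan : Submodule.span K (Set.range κ) = LinearMap.ker M.transpose.mulVecLin) :
    (Submodule.span K (Set.range u)).dualAnnihilator ⊓
        Submodule.span K (Set.range β) =
      Submodule.span K (Set.range fun j : Fin s => ∑ i : Fin n, κ j i • β i) := by
  set T : (Fin n → K) →ₗ[K] Module.Dual K V := Fintype.linearCombination K β with hT
  have hTc : ∀ c : Fin n → K, T c = ∑ i, c i • β i := by
    intro c; simp [hT, Fintype.linearCombination_apply]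
  have hker : ∀ c : Fin n → K,
      (c ∈ LinearMap.ker M.transpose.mulVecLin ↔ ∀ j, (T c) (u j) = 0) := by
    intro c
    rw [LinearMap.mem_ker]
    constructor
    · intro h j
      have := congrFun h j
      simp only [Matrix.mulVecLin_apply, Matrix.mulVec, dotProduct,
        Matrix.transpose_apply, Pi.zero_apply] at this
      simp only [hTc, LinearMap.sum_apply, LinearMap.smul_apply, smul_eq_mul]
      rw [← this]
      exact Finset.sum_congr rfl fun i _ => by rw [hM i j, mul_comm]
    · intro h
      funext j
      have := h j
      simp only [hTc, LinearMap.sum_apply, LinearMap.smul_apply, smul_eq_mul] at this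
      simp only [Matrix.mulVecLin_apply, Matrix.mulVec, dotProduct,
        Matrix.transpose_apply, Pi.zero_apply]
      rw [← this]
      exact Finset.sum_congr rfl fun i _ => by rw [hM i j, mul_comm]
  apply le_antisymm
  · intro φ hφ
    rw [Submodule.mem_inf] at hφ
    obtain ⟨hann, hspan⟩ := hφ
    rw [Submodule.mem_dualAnnihilator] at hann
    have : φ ∈ LinearMap.range T := by
      rw [hT, Fintype.range_linearCombination]; exact hspan
    obtain ⟨c, rfl⟩ := this
    have hc : c ∈ LinearMap.ker M.transpose.mulVecLin :=
      (hker c).2 fun j => hann (u j) (Submodule.subset_span ⟨j, rfl⟩)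
    rw [← hκspan] at hc
    have : T c ∈ Submodule.map T (Submodule.span K (Set.range κ)) :=
      Submodule.mem_map_of_mem hc
    rw [Submodule.map_span, ← Set.range_comp] at this
    have heq : (T ∘ κ) = fun j => ∑ i, κ j i • β i := funext fun j => hTc (κ j)
    rwa [heq] at this
  · rw [Submodule.span_le]
    rintro _ ⟨j, rfl⟩
    rw [SetLike.mem_coe, Submodule.mem_inf]
    have hκj : κ j ∈ LinearMap.ker M.transpose.mulVecLin := by
      rw [← hκspan]; exact Submodule.subset_span ⟨j, rfl⟩
    have h0 : ∀ k, (T (κ j)) (u k) = 0 := (hker (κ j)).1 hκj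
    constructor
    · rw [Submodule.mem_dualAnnihilator]
      intro w hw
      have hle : Submodule.span K (Set.range u) ≤
          LinearMap.ker (∑ i, κ j i • β i) := by
        rw [Submodule.span_le]
        rintro _ ⟨k, rfl⟩
        rw [SetLike.mem_coe, LinearMap.mem_ker]
        have := h0 k
        rwa [hTc] at this
      exact hle hw
    · exact Submodule.sum_mem _ fun i _ =>
        Submodule.smul_mem _ _ (Submodule.subset_span ⟨i, rfl⟩)
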